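/- For p, u > 0 with p ≠ u define x*(p,u) = ( p·u − p² − p·u·log(u/p) ) / ( p − u + p·log(u/p) ). Then for every fixed u > 0, x*(·,u) is nondecreasing in p: for all 0 < p₁ < p₂ with p₁ ≠ u and p₂ ≠ u, x*(p₁,u) ≤ x*(p₂,u). -/

import Mathlib

open Real Set

/-- Generic: if f 1 = 0 and f has nonnegative derivative on [1,∞), then f ≥ 0 there. -/
private lemma aux_nonneg (f f' : ℝ → ℝ) (hf1 : f 1 = 0)
    (hd : ∀ x ∈ Ici (1:ℝ), HasDerivAt f (f' x) x)
    (h0 : ∀ x ∈ Ioi (1:ℝ), 0 ≤ f' x) : ∀ r, 1 ≤ r → 0 ≤ f r := by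
  have hmono : MonotoneOn f (Ici 1) := by
    apply monotoneOn_of_deriv_nonneg (convex_Ici 1)
    · exact fun x hx => (hd x hx).continuousAt.continuousWithinAt
    · intro x hx
      rw [interior_Ici] at hx
      exact (hd x (Set.mem_Ici.mpr (le_of_lt (Set.mem_Ioi.mp hx)))).differentiableAt.differentiableWithinAt
    · intro x hx
      rw [interior_Ici] at hx
      rw [(hd x (Set.mem_Ici.mpr (le_of_lt (Set.mem_Ioi.mp hx)))).deriv]
      exact h0 x hx
  intro r hr
  have := hmono self_mem_Ici hr hr
  rwa [hf1] at this

private lemma key1 (r : ℝ) (hr : 1 ≤ r) : 2*(r-1)/(r+1) ≤ Real.log r := by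
  have h0 : (0:ℝ) < r := lt_of_lt_of_le one_pos hr
  have := aux_nonneg (fun x => Real.log x - 2*(x-1)/(x+1))
      (fun x => (x-1)^2/(x*(x+1)^2)) (by norm_num) ?_ ?_ r hr
  · linarith
  · intro x hx
    have hx0 : (0:ℝ) < x := lt_of_lt_of_le one_pos hx
    have hx1 : x + 1 ≠ 0 := by positivity
    have h1 : HasDerivAt (fun y : ℝ => 2*(y-1)/(y+1))
        ((2*1*(x+1) - 2*(x-1)*1)/(x+1)^2) x :=
      (((hasDerivAt_id x).sub_const 1).const_mul 2).div ((hasDerivAt_id x).add_const 1) hx1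
    have h2 := (Real.hasDerivAt_log hx0.ne').sub h1
    refine h2.congr_deriv ?_
    field_simp
    ring
  · intro x hx
    have hx0 : (0:ℝ) < x := lt_trans one_pos hx
    positivity

private lemma key2 (r : ℝ) (hr : 1 ≤ r) : Real.log r ≤ (r - r⁻¹)/2 := by
  have h0 : (0:ℝ) < r := lt_of_lt_of_le one_pos hr
  have := aux_nonneg (fun x => (x - x⁻¹)/2 - Real.log x)
      (fun x => (x-1)^2/(2*x^2)) (by norm_num) ?_ ?_ r hr
  · linarith
  · intro x hx
    have hx0 : (0:ℝ) < x := lt_of_lt_of_le one_pos hx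
    have h1 : HasDerivAt (fun y : ℝ => (y - y⁻¹)/2) ((1 - -(x^2)⁻¹)/2) x :=
      ((hasDerivAt_id x).sub (hasDerivAt_inv hx0.ne')).div_const 2
    have h2 := h1.sub (Real.hasDerivAt_log hx0.ne')
    refine h2.congr_deriv ?_
    field_simp
    ring
  · intro x hx
    have hx0 : (0:ℝ) < x := lt_trans one_pos hx
    positivity

/-- log r ≤ 2(r-1)/(r+1) for 0 < r ≤ 1 -/
private lemma key1' (r : ℝ) (hr0 : 0 < r) (hr : r ≤ 1) : Real.log r ≤ 2*(r-1)/(r+1) := by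
  have h := key1 r⁻¹ (one_le_inv_iff₀.mpr ⟨hr0, hr⟩)
  rw [Real.log_inv] at h
  have hr1 : (0:ℝ) < r + 1 := by positivity
  have h2 : 2*(r⁻¹-1)/(r⁻¹+1) = 2*(1-r)/(1+r) := by
    rw [div_eq_div_iff (by positivity) (by positivity)]
    field_simp
  rw [h2, div_le_iff₀ (by positivity : (0:ℝ) < 1+r)] at h
  rw [le_div_iff₀ hr1]
  nlinarith [h]

/-- (r - r⁻¹)/2 ≤ log r for 0 < r ≤ 1 -/
private lemma key2' (r : ℝ) (hr0 : 0 < r) (hr : r ≤ 1) : (r - r⁻¹)/2 ≤ Real.log r := by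
  have h := key2 r⁻¹ (one_le_inv_iff₀.mpr ⟨hr0, hr⟩)
  rw [Real.log_inv, inv_inv] at h
  linarith

/-- Convenient polynomial-in-log forms of the numerator and denominator. -/
private noncomputable def Nf (u q : ℝ) : ℝ :=
  q*u - q^2 - q*u*Real.log u + u*(q*Real.log q)
private noncomputable def Df (u q : ℝ) : ℝ :=
  q - u + q*Real.log u - q*Real.log q

/-- The unique maximizer in x of d(p/(p+x) | u/(u+x)) for h(x,p) = p/(p+x). -/
noncomputable def xstar (p u : ℝ) : ℝ :=
  (p * u - p ^ 2 - p * u * Real.log (u / p)) / (p - u + p * Real.log (u / p))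

private lemma xstar_eq (u p : ℝ) (hu : 0 < u) (hp : 0 < p) :
    xstar p u = Nf u p / Df u p := by
  unfold xstar Nf Df
  rw [Real.log_div hu.ne' hp.ne']
  congr 1 <;> ring

private lemma Df_neg {u p : ℝ} (hu : 0 < u) (hp : 0 < p) (hne : p ≠ u) : Df u p < 0 := by
  have h1 : Real.log (u/p) < u/p - 1 :=
    Real.log_lt_sub_one_of_pos (by positivity) (by
      intro h
      exact hne (by field_simp at h; linarith))
  rw [Real.log_div hu.ne' hp.ne'] at h1
  have hpu : p * (u/p) = u := by field_simp
  have h2 : p * (Real.log u) - p * (Real.log p) < u - p := by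
    have h3 := mul_lt_mul_of_pos_left h1 hp
    nlinarith [h3, hpu]
  unfold Df
  linarith

private lemma hasDeriv_xs {u p : ℝ} (hu : 0 < u) (hp : 0 < p) (hne : p ≠ u) :
    HasDerivAt (fun q => Nf u q / Df u q)
      (((2*u - 2*p - u*(Real.log u - Real.log p)) * Df u p
        - Nf u p * (Real.log u - Real.log p)) / (Df u p)^2) p := by
  have hml := Real.hasDerivAt_mul_log hp.ne'
  have hN : HasDerivAt (Nf u) (2*u - 2*p - u*(Real.log u - Real.log p)) p := by
    have h := ((((hasDerivAt_id p).mul_const u).sub (hasDerivAt_pow 2 p)).sub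
      (((hasDerivAt_id p).mul_const u).mul_const (Real.log u))).add (hml.const_mul u)
    refine h.congr_deriv ?_
    push_cast
    ring
  have hD : HasDerivAt (Df u) (Real.log u - Real.log p) p := by
    have h := (((hasDerivAt_id p).sub_const u).add
      ((hasDerivAt_id p).mul_const (Real.log u))).sub hml
    refine h.congr_deriv ?_
    ring
  exact hN.div hD (Df_neg hu hp hne).ne

private lemma mono_piece {u : ℝ} (hu : 0 < u) (s : Set ℝ) (hconv : Convex ℝ s)
    (hopen : IsOpen s) (hs : ∀ x ∈ s, 0 < x ∧ x ≠ u) :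
    MonotoneOn (fun q => Nf u q / Df u q) s := by
  apply monotoneOn_of_deriv_nonneg hconv
  · exact fun x hx =>
      (hasDeriv_xs hu (hs x hx).1 (hs x hx).2).continuousAt.continuousWithinAt
  · rw [hopen.interior_eq]
    exact fun x hx =>
      (hasDeriv_xs hu (hs x hx).1 (hs x hx).2).differentiableAt.differentiableWithinAt
  · rw [hopen.interior_eq]
    intro x hx
    obtain ⟨hx0, hxu⟩ := hs x hx
    rw [(hasDeriv_xs hu hx0 hxu).deriv]
    apply div_nonneg _ (sq_nonneg _)
    have hkey : (2*u - 2*x - u*(Real.log u - Real.log x)) * Df u x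
        - Nf u x * (Real.log u - Real.log x)
        = (x - u) * (2*(u-x) - (x+u)*(Real.log u - Real.log x)) := by
      unfold Nf Df; ring
    rw [hkey]
    have hux : (0:ℝ) < u + x := by positivity
    have h2 : 2*(u/x-1)/(u/x+1) = 2*(u-x)/(u+x) := by
      rw [div_eq_div_iff (by positivity) (by positivity)]
      field_simp
    rcases lt_or_gt_of_ne hxu with hlt | hgt
    · -- x < u : both factors nonpositive
      have h := key1 (u/x) (by rw [le_div_iff₀ hx0]; linarith)
      rw [h2, div_le_iff₀ hux, Real.log_div hu.ne' hx0.ne'] at h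
      have ha : x - u ≤ 0 := by linarith
      have hb : 2*(u-x) - (x+u)*(Real.log u - Real.log x) ≤ 0 := by nlinarith [h]
      nlinarith [mul_nonneg (neg_nonneg.mpr ha) (neg_nonneg.mpr hb)]
    · -- u < x : both factors nonneg
      have h := key1' (u/x) (by positivity) (by rw [div_le_one hx0]; linarith)
      rw [h2, le_div_iff₀ hux, Real.log_div hu.ne' hx0.ne'] at h
      have ha : 0 ≤ x - u := by linarith
      have hb : 0 ≤ 2*(u-x) - (x+u)*(Real.log u - Real.log x) := by nlinarith [h]
      exact mul_nonneg ha hb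

private lemma xstar_le_u {u p : ℝ} (hu : 0 < u) (hp : 0 < p) (hpu : p < u) :
    xstar p u ≤ u := by
  rw [xstar_eq u p hu hp, div_le_iff_of_neg (Df_neg hu hp hpu.ne)]
  have h := key2 (u/p) (by rw [le_div_iff₀ hp]; linarith)
  have hinv : (u/p)⁻¹ = p/u := by field_simp
  rw [hinv, Real.log_div hu.ne' hp.ne'] at h
  have hdiv : (u/p - p/u)/2 = (u^2 - p^2)/(2*(p*u)) := by
    field_simp
  rw [hdiv, le_div_iff₀ (by positivity : (0:ℝ) < 2*(p*u))] at h
  unfold Nf Df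
  nlinarith [h]

private lemma u_le_xstar {u p : ℝ} (hu : 0 < u) (hpu : u < p) :
    u ≤ xstar p u := by
  have hp : 0 < p := lt_trans hu hpu
  rw [xstar_eq u p hu hp, le_div_iff_of_neg (Df_neg hu hp (ne_of_gt hpu))]
  have h := key2' (u/p) (by positivity) (by rw [div_le_one hp]; linarith)
  have hinv : (u/p)⁻¹ = p/u := by field_simp
  rw [hinv, Real.log_div hu.ne' hp.ne'] at h
  have hdiv : (u/p - p/u)/2 = (u^2 - p^2)/(2*(p*u)) := by
    field_simp
  rw [hdiv, div_le_iff₀ (by positivity : (0:ℝ) < 2*(p*u))] at h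
  unfold Nf Df
  nlinarith [h]

/-- Lemma B.5: x*(p,u) is nondecreasing in p for fixed u. -/
theorem xstar_mono_in_p (u : ℝ) (hu : 0 < u) :
    ∀ p₁ p₂ : ℝ, 0 < p₁ → p₁ < p₂ → p₁ ≠ u → p₂ ≠ u →
      xstar p₁ u ≤ xstar p₂ u := by
  intro p₁ p₂ hp1 hlt h1u h2u
  have hp2 : 0 < p₂ := lt_trans hp1 hlt
  rcases lt_or_gt_of_ne h1u with h1 | h1 <;> rcases lt_or_gt_of_ne h2u with h2 | h2
  · have hm := mono_piece hu (Ioo 0 u) (convex_Ioo 0 u) isOpen_Ioo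
      (fun x hx => ⟨hx.1, ne_of_lt hx.2⟩)
    rw [xstar_eq u p₁ hu hp1, xstar_eq u p₂ hu hp2]
    exact hm ⟨hp1, h1⟩ ⟨hp2, h2⟩ (le_of_lt hlt)
  · exact le_trans (xstar_le_u hu hp1 h1) (u_le_xstar hu h2)
  · exact absurd (lt_trans h2 h1) (not_lt.mpr (le_of_lt hlt))
  · have hm := mono_piece hu (Ioi u) (convex_Ioi u) isOpen_Ioi
      (fun x hx => ⟨lt_trans hu hx, ne_of_gt hx⟩)
    rw [xstar_eq u p₁ hu hp1, xstar_eq u p₂ hu hp2]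
    exact hm h1 h2 (le_of_lt hlt)
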